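/- Landen's transformation: for 0 ≤ k₀ < 1 with k₁ = (1 − √(1−k₀²))/(1 + √(1−k₀²)), one has K(k₀) = (1 + k₁)·K(k₁), where K(k) = ∫₀^{π/2} dφ/√(1 − k²sin²φ). -/

import Mathlib

open intervalIntegral Real

lemma stmt_11_aux_cont (m : ℝ) (hm0 : 0 ≤ m) (hm : m < 1) :
    Continuous (fun φ : ℝ => 1 / Real.sqrt (1 - m ^ 2 * Real.sin φ ^ 2)) := by
  have hpos : ∀ φ : ℝ, 0 < 1 - m ^ 2 * Real.sin φ ^ 2 := by
    intro φ
    nlinarith [Real.sin_sq_le_one φ, sq_nonneg (Real.sin φ), sq_nonneg m]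
  apply Continuous.div continuous_const
  · exact (Real.continuous_sqrt.comp (by continuity))
  · intro φ
    exact ne_of_gt (Real.sqrt_pos.mpr (hpos φ))

theorem stmt_11 (k₀ : ℝ) (hk : 0 ≤ k₀) (hk1 : k₀ < 1)
    (k₁ : ℝ) (hk₁ : k₁ = (1 - Real.sqrt (1 - k₀ ^ 2)) / (1 + Real.sqrt (1 - k₀ ^ 2))) :
    (∫ φ in (0:ℝ)..(π / 2), 1 / Real.sqrt (1 - k₀ ^ 2 * Real.sin φ ^ 2))
      = (1 + k₁) * ∫ φ in (0:ℝ)..(π / 2), 1 / Real.sqrt (1 - k₁ ^ 2 * Real.sin φ ^ 2) := by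
  -- basic facts about c and k₁
  set c := Real.sqrt (1 - k₀ ^ 2) with hc
  have hc2 : c ^ 2 = 1 - k₀ ^ 2 := Real.sq_sqrt (by nlinarith)
  have hcpos : 0 < c := Real.sqrt_pos.mpr (by nlinarith)
  have hcle : c ≤ 1 := by nlinarith
  have hk10 : 0 ≤ k₁ := by rw [hk₁]; exact div_nonneg (by linarith) (by linarith)
  have hk1lt : k₁ < 1 := by rw [hk₁, div_lt_one (by linarith)]; linarith
  have key : k₀ ^ 2 * (1 + k₁) ^ 2 = 4 * k₁ := by
    rw [hk₁]; field_simp; nlinarith [hc2]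
  clear hc2 hcpos hcle hk₁ hc
  -- the substitution machinery
  set h : ℝ → ℝ := fun φ => (1 + k₁) * Real.sin φ / (1 + k₁ * Real.sin φ ^ 2) with hh
  set g : ℝ → ℝ := fun φ => Real.arcsin (h φ) with hg
  set G : ℝ → ℝ := fun φ => (1 + k₁) * (1 - k₁ * Real.sin φ ^ 2) /
      ((1 + k₁ * Real.sin φ ^ 2) * Real.sqrt (1 - k₁ ^ 2 * Real.sin φ ^ 2)) with hG
  have hD : ∀ φ : ℝ, 0 < 1 + k₁ * Real.sin φ ^ 2 := fun φ => by positivity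
  have hQ : ∀ φ : ℝ, 0 < 1 - k₁ ^ 2 * Real.sin φ ^ 2 := by
    intro φ; nlinarith [Real.sin_sq_le_one φ, sq_nonneg (Real.sin φ), sq_nonneg k₁]
  have hN : ∀ φ : ℝ, 0 < 1 - k₁ * Real.sin φ ^ 2 := by
    intro φ; nlinarith [Real.sin_sq_le_one φ, sq_nonneg (Real.sin φ)]
  have habs : ∀ φ : ℝ, |h φ| ≤ 1 := by
    intro φ
    rw [abs_le, hh]
    have hs := Real.neg_one_le_sin φ
    have hs' := Real.sin_le_one φ
    constructor
    · rw [le_div_iff₀ (hD φ)]; nlinarith [sq_nonneg (1 + Real.sin φ), sq_nonneg (Real.sin φ)]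
    · rw [div_le_one (hD φ)]; nlinarith [sq_nonneg (1 - Real.sin φ)]
  -- key algebraic identity
  have hA : ∀ φ : ℝ, 1 - k₀ ^ 2 * (h φ) ^ 2
      = ((1 - k₁ * Real.sin φ ^ 2) / (1 + k₁ * Real.sin φ ^ 2)) ^ 2 := by
    intro φ
    rw [hh]
    have := (hD φ).ne'
    field_simp
    nlinarith [key, sq_nonneg (Real.sin φ)]
  have hB : ∀ φ : ℝ, 1 - (h φ) ^ 2
      = (1 - Real.sin φ ^ 2) * (1 - k₁ ^ 2 * Real.sin φ ^ 2) / (1 + k₁ * Real.sin φ ^ 2) ^ 2 := by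
    intro φ
    rw [hh]
    have := (hD φ).ne'
    field_simp
    ring
  -- derivative on the open interval
  have hder : ∀ φ ∈ Set.Ioo (0:ℝ) (π/2), HasDerivAt g (G φ) φ := by
    intro φ hφ
    have hs0 : 0 < Real.sin φ :=
      Real.sin_pos_of_pos_of_lt_pi hφ.1 (hφ.2.trans (by linarith [Real.pi_pos]))
    have hcos : 0 < Real.cos φ :=
      Real.cos_pos_of_mem_Ioo ⟨by linarith [hφ.1, Real.pi_pos], hφ.2⟩
    have hs1 : Real.sin φ < 1 := by
      nlinarith [Real.sin_sq_add_cos_sq φ]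
    have hdh : HasDerivAt h
        ((1 + k₁) * Real.cos φ * (1 - k₁ * Real.sin φ ^ 2) / (1 + k₁ * Real.sin φ ^ 2) ^ 2) φ := by
      have h1 : HasDerivAt (fun φ => (1 + k₁) * Real.sin φ) ((1 + k₁) * Real.cos φ) φ :=
        (Real.hasDerivAt_sin φ).const_mul _
      have h2 : HasDerivAt (fun φ => 1 + k₁ * Real.sin φ ^ 2)
          (k₁ * (2 * Real.sin φ * Real.cos φ)) φ := by
        have := ((Real.hasDerivAt_sin φ).pow 2).const_mul k₁
        simpa using (this.const_add 1)
      have := h1.div h2 (hD φ).ne'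
      refine this.congr_deriv ?_
      field_simp
      ring
    have hne1 : h φ ≠ 1 := by
      rw [hh]
      rw [ne_eq, div_eq_one_iff_eq (hD φ).ne']
      intro hcontra
      have h1 : (0:ℝ) < 1 - k₁ * Real.sin φ := by nlinarith
      nlinarith [mul_pos (sub_pos.mpr hs1) h1]
    have hnem1 : h φ ≠ -1 := by
      have : 0 < h φ := by
        rw [hh]; positivity
      linarith
    have harc := (Real.hasDerivAt_arcsin hnem1 hne1).comp φ hdh
    refine harc.congr_deriv ?_
    have hsqrtB : Real.sqrt (1 - (h φ) ^ 2)
        = Real.cos φ * Real.sqrt (1 - k₁ ^ 2 * Real.sin φ ^ 2) / (1 + k₁ * Real.sin φ ^ 2) := by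
      rw [hB φ]
      rw [show (1 : ℝ) - Real.sin φ ^ 2 = Real.cos φ ^ 2 by
        have := Real.sin_sq_add_cos_sq φ; linarith]
      rw [show Real.cos φ ^ 2 * (1 - k₁ ^ 2 * Real.sin φ ^ 2) / (1 + k₁ * Real.sin φ ^ 2) ^ 2
          = (Real.cos φ * Real.sqrt (1 - k₁ ^ 2 * Real.sin φ ^ 2) / (1 + k₁ * Real.sin φ ^ 2)) ^ 2 by
        rw [div_pow, mul_pow, Real.sq_sqrt (hQ φ).le]]
      exact Real.sqrt_sq (by positivity)
    rw [hG, hsqrtB]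
    have hQne : Real.sqrt (1 - k₁ ^ 2 * Real.sin φ ^ 2) ≠ 0 := (Real.sqrt_pos.mpr (hQ φ)).ne'
    have hDne : (1 + k₁ * Real.sin φ ^ 2) ≠ 0 := (hD φ).ne'
    field_simp
  -- endpoints
  have hg0 : g 0 = 0 := by simp [hg, hh]
  have hgpi : g (π/2) = π/2 := by
    have h1 : h (π/2) = 1 := by
      rw [hh]; simp
      exact (by linarith : (1:ℝ) + k₁ ≠ 0)
    rw [show g (π/2) = Real.arcsin (h (π/2)) from rfl, h1, Real.arcsin_one]
  -- continuity
  have hden_cont : Continuous (fun φ : ℝ => 1 + k₁ * Real.sin φ ^ 2) :=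
    continuous_const.add (continuous_const.mul (Real.continuous_sin.pow 2))
  have hhcont : Continuous h := by
    apply Continuous.div (continuous_const.mul Real.continuous_sin) hden_cont
    exact fun φ => (hD φ).ne'
  have hgcont : Continuous g := Real.continuous_arcsin.comp hhcont
  have hGcont : Continuous G := by
    apply Continuous.div
      (continuous_const.mul (continuous_const.sub (continuous_const.mul (Real.continuous_sin.pow 2))))
    · exact hden_cont.mul (Real.continuous_sqrt.comp
        (continuous_const.sub (continuous_const.mul (Real.continuous_sin.pow 2))))
    · intro φ
      exact (mul_pos (hD φ) (Real.sqrt_pos.mpr (hQ φ))).ne'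
  -- pointwise identity for the substituted integrand
  have hpt : ∀ φ : ℝ, G φ • ((fun θ => 1 / Real.sqrt (1 - k₀ ^ 2 * Real.sin θ ^ 2)) ∘ g) φ
      = (1 + k₁) * (1 / Real.sqrt (1 - k₁ ^ 2 * Real.sin φ ^ 2)) := by
    intro φ
    have habs' := abs_le.mp (habs φ)
    have hsin : Real.sin (g φ) = h φ := Real.sin_arcsin habs'.1 habs'.2
    have hsq : Real.sqrt (1 - k₀ ^ 2 * Real.sin (g φ) ^ 2)
        = (1 - k₁ * Real.sin φ ^ 2) / (1 + k₁ * Real.sin φ ^ 2) := by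
      rw [hsin, hA φ]
      exact Real.sqrt_sq (div_nonneg (hN φ).le (hD φ).le)
    simp only [Function.comp_apply, smul_eq_mul, hsq, hG]
    have hQne : Real.sqrt (1 - k₁ ^ 2 * Real.sin φ ^ 2) ≠ 0 := (Real.sqrt_pos.mpr (hQ φ)).ne'
    have hDne : (1 + k₁ * Real.sin φ ^ 2) ≠ 0 := (hD φ).ne'
    have hNne : (1 - k₁ * Real.sin φ ^ 2) ≠ 0 := (hN φ).ne'
    field_simp
  -- the substitution
  have hpi2 : (0:ℝ) ≤ π/2 := by positivity
  have hsub := integral_comp_smul_deriv'' (a := (0:ℝ)) (b := π/2) (f := g) (f' := G)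
    (g := fun θ => 1 / Real.sqrt (1 - k₀ ^ 2 * Real.sin θ ^ 2))
    hgcont.continuousOn
    (by
      intro x hx
      rw [min_eq_left hpi2, max_eq_right hpi2] at hx
      exact (hder x hx).hasDerivWithinAt)
    hGcont.continuousOn
    ((stmt_11_aux_cont k₀ hk hk1).continuousOn)
  rw [hg0, hgpi] at hsub
  rw [← hsub]
  rw [intervalIntegral.integral_congr (g := fun φ =>
      (1 + k₁) * (1 / Real.sqrt (1 - k₁ ^ 2 * Real.sin φ ^ 2))) (fun φ _ => hpt φ)]
  rw [intervalIntegral.integral_const_mul]
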